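/- Let G be a finite abelian group with free presentation 1 → R → F → G → 1 where F is the free group on generators x_1, ..., x_t mapping to generators of the cyclic factors of G of orders r_1, ..., r_t, R = S·γ_2(F), and S is the normal closure of {x_1^{r_1}, ..., x_t^{r_t}} in F. Then for all c ≥ 1, N_cM(G) ≅ γ_{c+1}(F) / (ρ_{c+1}(S)·γ_{c+2}(F)). -/

import Mathlib

/-- `[R, F, …, F]` with `n` copies of `F`: `iterComm R 0 = R`,
`iterComm R (n+1) = [iterComm R n, F]`. -/
def iterComm {F : Type*} [Group F] (R : Subgroup F) : ℕ → Subgroup F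
  | 0 => R
  | n + 1 => ⁅iterComm R n, (⊤ : Subgroup F)⁆

theorem iterComm_normal {F : Type*} [Group F] (R : Subgroup F) [h : R.Normal] :
    ∀ n, (iterComm R n).Normal
  | 0 => h
  | n + 1 => by
      haveI := iterComm_normal R n
      exact Subgroup.commutator_normal _ _

/-- The `c`-nilpotent multiplier relative to a free presentation with kernel `R`
inside the free group `F`:
`𝒩_c M = (R ⊓ γ_{c+1}(F)) / [R, F, …, F]` (`c` copies of `F`).
Note `γ_{c+1}(F) = (⊤ : Subgroup F).lowerCentralSeries c` in Mathlib's indexing. -/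
def ncMType {F : Type*} [Group F] (R : Subgroup F) (c : ℕ) : Type _ :=
  (R ⊓ (⊤ : Subgroup F).lowerCentralSeries c : Subgroup F) ⧸
    ((iterComm R c).subgroupOf (R ⊓ (⊤ : Subgroup F).lowerCentralSeries c))

noncomputable instance {F : Type*} [Group F] (R : Subgroup F) [R.Normal] (c : ℕ) :
    Group (ncMType R c) := by
  haveI : ((iterComm R c).subgroupOf (R ⊓ (⊤ : Subgroup F).lowerCentralSeries c)).Normal :=
    Subgroup.Normal.subgroupOf (iterComm_normal R c) _
  exact QuotientGroup.Quotient.group _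

/-- `S`: the normal closure of `{x₁^{r₁}, …, x_t^{r_t}}` in the free group on
`x₁, …, x_t`. -/
def Sgrp (t : ℕ) (r : Fin t → ℕ) : Subgroup (FreeGroup (Fin t)) :=
  Subgroup.normalClosure (Set.range fun i => FreeGroup.of i ^ r i)

/-- The quotient `γ_{c+1}(F) / (ρ_{c+1}(S)·γ_{c+2}(F))`; recall
`γ_n(F) = (⊤ : Subgroup F).lowerCentralSeries (n-1)` and `ρ_{c+1}(S) = iterComm S c`. -/
def QType (t : ℕ) (r : Fin t → ℕ) (c : ℕ) : Type :=
  ((⊤ : Subgroup (FreeGroup (Fin t))).lowerCentralSeries c : Subgroup (FreeGroup (Fin t))) ⧸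
    ((iterComm (Sgrp t r) c ⊔ (⊤ : Subgroup (FreeGroup (Fin t))).lowerCentralSeries (c + 1)).subgroupOf
      ((⊤ : Subgroup (FreeGroup (Fin t))).lowerCentralSeries c))

noncomputable instance (t : ℕ) (r : Fin t → ℕ) (c : ℕ) : Group (QType t r c) := by
  haveI : (Sgrp t r).Normal := Subgroup.normalClosure_normal
  haveI : (iterComm (Sgrp t r) c).Normal := iterComm_normal _ c
  haveI : ((iterComm (Sgrp t r) c ⊔
      (⊤ : Subgroup (FreeGroup (Fin t))).lowerCentralSeries (c + 1)).subgroupOf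
      ((⊤ : Subgroup (FreeGroup (Fin t))).lowerCentralSeries c)).Normal :=
    Subgroup.Normal.subgroupOf inferInstance _
  exact QuotientGroup.Quotient.group _


lemma commutator_sup_top {G : Type*} [Group G] (H K : Subgroup G) [H.Normal] [K.Normal] :
    ⁅H ⊔ K, (⊤ : Subgroup G)⁆ = ⁅H, (⊤ : Subgroup G)⁆ ⊔ ⁅K, (⊤ : Subgroup G)⁆ := by
  refine le_antisymm ?_ (sup_le (Subgroup.commutator_mono le_sup_left le_rfl)
    (Subgroup.commutator_mono le_sup_right le_rfl))
  set M : Subgroup G := ⁅H, (⊤ : Subgroup G)⁆ ⊔ ⁅K, (⊤ : Subgroup G)⁆ with hM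
  haveI : ⁅H, (⊤ : Subgroup G)⁆.Normal := Subgroup.commutator_normal _ _
  haveI : ⁅K, (⊤ : Subgroup G)⁆.Normal := Subgroup.commutator_normal _ _
  haveI : M.Normal := Subgroup.sup_normal _ _
  set φ := QuotientGroup.mk' M with hφ
  have key : ∀ (L : Subgroup G), ⁅L, (⊤ : Subgroup G)⁆ ≤ M →
      L ≤ (Subgroup.center (G ⧸ M)).comap φ := by
    intro L hL g hg
    simp only [Subgroup.mem_comap, Subgroup.mem_center_iff]
    intro z
    obtain ⟨f, rfl⟩ := QuotientGroup.mk'_surjective M z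
    symm
    rw [← commutatorElement_eq_one_iff_mul_comm, ← map_commutatorElement,
      QuotientGroup.mk'_apply, QuotientGroup.eq_one_iff]
    exact hL (Subgroup.commutator_mem_commutator hg (Subgroup.mem_top f))
  have hsup : H ⊔ K ≤ (Subgroup.center (G ⧸ M)).comap φ :=
    sup_le (key H le_sup_left) (key K le_sup_right)
  rw [Subgroup.commutator_le]
  intro g hg f _
  have hz := hsup hg
  simp only [Subgroup.mem_comap, Subgroup.mem_center_iff] at hz
  refine (QuotientGroup.eq_one_iff _).mp ?_
  show φ (@Bracket.bracket _ _ commutatorElement g f) = 1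
  rw [map_commutatorElement, commutatorElement_eq_one_iff_mul_comm]
  exact (hz (φ f)).symm

lemma iterComm_sup {F : Type*} [Group F] (S : Subgroup F) [S.Normal] :
    ∀ n, iterComm (S ⊔ (⊤ : Subgroup F).lowerCentralSeries 1) n
      = iterComm S n ⊔ (⊤ : Subgroup F).lowerCentralSeries (n + 1)
  | 0 => rfl
  | n + 1 => by
      haveI := iterComm_normal S n
      show ⁅iterComm (S ⊔ (⊤ : Subgroup F).lowerCentralSeries 1) n, (⊤ : Subgroup F)⁆ = _
      rw [iterComm_sup S n, commutator_sup_top]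
      rfl

/-- For the standard free presentation of a finite abelian group
`G = ℤ/r₁ ⊕ ⋯ ⊕ ℤ/r_t` with `F` free on `x₁, …, x_t`, kernel
`R = S·γ₂(F)` where `S = ⟨x_i^{r_i}⟩^F`, one has for all `c ≥ 1`:
`𝒩_c M(G) ≅ γ_{c+1}(F)/(ρ_{c+1}(S)·γ_{c+2}(F))`. -/
theorem ncM_eq_gamma_quotient (t : ℕ) (r : Fin t → ℕ) (hr : ∀ i, 0 < r i)
    (c : ℕ) (hc : 1 ≤ c)
    (π : FreeGroup (Fin t) →* Multiplicative (∀ i, ZMod (r i)))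
    (hgen : ∀ i, π (FreeGroup.of i) = Multiplicative.ofAdd (Pi.single i 1))
    (hπ : Function.Surjective π)
    (hker : π.ker = Sgrp t r ⊔ (⊤ : Subgroup (FreeGroup (Fin t))).lowerCentralSeries 1) :
    Nonempty (ncMType π.ker c ≃* QType t r c) := by
  haveI : (Sgrp t r).Normal := Subgroup.normalClosure_normal
  haveI : (iterComm (Sgrp t r) c).Normal := iterComm_normal _ c
  haveI : (iterComm π.ker c).Normal := iterComm_normal _ c
  have h1 : π.ker ⊓ (⊤ : Subgroup (FreeGroup (Fin t))).lowerCentralSeries c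
      = (⊤ : Subgroup (FreeGroup (Fin t))).lowerCentralSeries c :=
    inf_eq_right.mpr (by
      rw [hker]; exact le_trans (Subgroup.lowerCentralSeries_antitone _ hc) le_sup_right)
  have h2 : iterComm π.ker c
      = iterComm (Sgrp t r) c ⊔ (⊤ : Subgroup (FreeGroup (Fin t))).lowerCentralSeries (c + 1) := by
    rw [hker]; exact iterComm_sup _ c
  haveI : ((iterComm π.ker c).subgroupOf
      (π.ker ⊓ (⊤ : Subgroup (FreeGroup (Fin t))).lowerCentralSeries c)).Normal :=
    Subgroup.Normal.subgroupOf inferInstance _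
  haveI : ((iterComm (Sgrp t r) c ⊔
      (⊤ : Subgroup (FreeGroup (Fin t))).lowerCentralSeries (c + 1)).subgroupOf
      ((⊤ : Subgroup (FreeGroup (Fin t))).lowerCentralSeries c)).Normal :=
    Subgroup.Normal.subgroupOf inferInstance _
  refine ⟨QuotientGroup.congr _ _ (MulEquiv.subgroupCongr h1) ?_⟩
  ext x
  simp only [Subgroup.mem_map, Subgroup.mem_subgroupOf]
  constructor
  · rintro ⟨y, hy, rfl⟩
    rw [← h2]
    simpa [MulEquiv.subgroupCongr_apply] using hy
  · intro hx
    have hxk : (x : FreeGroup (Fin t)) ∈ π.ker := by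
      rw [hker]
      exact Subgroup.mem_sup_right (Subgroup.lowerCentralSeries_antitone _ hc x.2)
    refine ⟨⟨(x : FreeGroup (Fin t)), hxk, x.2⟩, ?_, ?_⟩
    · rw [h2]; exact hx
    · exact Subtype.ext (MulEquiv.subgroupCongr_apply h1 _)
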